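/- Let (X,μ) be a σ-finite measure space (μ(X) not necessarily finite), let 1 ≤ p < ∞, and let g : X → ℂ be a measurable function such that the pointwise product f·g belongs to L^1(X,μ) for every f ∈ L^p(X,μ). Then g ∈ L^{p'}(X,μ), where 1/p + 1/p' = 1 (p' = ∞ when p = 1). -/

import Mathlib

open MeasureTheory ENNReal



/-- Converse Hölder, finite exponent case. -/
lemma aux_conv_holder_lt_top {X : Type*} [MeasurableSpace X] {μ : Measure X}
    {p p' : ℝ≥0∞} (hp0 : p ≠ 0) (hp_top : p ≠ ∞) (hp'0 : p' ≠ 0) (hp'_top : p' ≠ ∞)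
    (hpq : 1 / p.toReal + 1 / p'.toReal = 1)
    {b : X → ℂ} (hb : Measurable b) (hbL : MemLp b p' μ)
    {C : ℝ}
    (hC : ∀ f : X → ℂ, MemLp f p μ → ‖∫ x, f x * b x ∂μ‖ ≤ C * (eLpNorm f p μ).toReal) :
    eLpNorm b p' μ ≤ ENNReal.ofReal C := by
  set r : ℝ := p'.toReal with hr_def
  set pr : ℝ := p.toReal with hpr_def
  have hpr0 : 0 < pr := ENNReal.toReal_pos hp0 hp_top
  have hr0 : 0 < r := ENNReal.toReal_pos hp'0 hp'_top
  have hr1 : 1 < r := by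
    by_contra h
    push_neg at h
    have h1 : 1 ≤ 1 / r := by
      rw [le_div_iff₀ hr0]; linarith
    have h2 : 0 < 1 / pr := by positivity
    linarith
  -- key real identity : (r - 1) * pr = r
  have hsum : r + pr = pr * r := by
    field_simp at hpq
    linarith
  have hkey : (r - 1) * pr = r := by ring_nf; nlinarith
  set I : ℝ≥0∞ := ∫⁻ x, (‖b x‖₊ : ℝ≥0∞) ^ r ∂μ with hI_def
  have hEb : eLpNorm b p' μ = I ^ (1 / r) := by
    rw [eLpNorm_eq_lintegral_rpow_enorm_toReal hp'0 hp'_top]; rfl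
  have hI_top : I ≠ ∞ := by
    intro h
    have h2 := hbL.2
    rw [hEb, h, ENNReal.top_rpow_of_pos (by positivity : (0:ℝ) < 1 / r)] at h2
    exact lt_irrefl _ h2
  rcases eq_or_ne I 0 with hI0 | hI0
  · rw [hEb, hI0, ENNReal.zero_rpow_of_pos (by positivity)]
    exact zero_le
  -- the test function
  set f : X → ℂ := fun x =>
    if b x = 0 then 0 else ((‖b x‖ ^ (r - 1) / ‖b x‖ : ℝ) : ℂ) * (starRingEnd ℂ) (b x) with hf_def
  have hf_meas : Measurable f := by
    apply Measurable.ite (hb (measurableSet_singleton 0)) measurable_const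
    exact ((Complex.measurable_ofReal.comp
      ((hb.norm.pow_const _).div hb.norm)).mul (Complex.continuous_conj.measurable.comp hb))
  have hfnorm : ∀ x, ‖f x‖ = ‖b x‖ ^ (r - 1) := by
    intro x
    rcases eq_or_ne (b x) 0 with h0 | h0
    · simp [hf_def, h0, Real.zero_rpow (by linarith : r - 1 ≠ 0)]
    · have hb0 : (0:ℝ) < ‖b x‖ := norm_pos_iff.mpr h0
      simp only [hf_def, if_neg h0, norm_mul, Complex.norm_real, RingHomIsometric.norm_map,
        Real.norm_eq_abs]
      rw [abs_of_nonneg (by positivity), div_mul_cancel₀]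
      exact hb0.ne'
  have hfnnorm : ∀ x, (‖f x‖₊ : ℝ≥0∞) = (‖b x‖₊ : ℝ≥0∞) ^ (r - 1) := by
    intro x
    rw [← enorm_eq_nnnorm, ← enorm_eq_nnnorm, ← ofReal_norm, ← ofReal_norm, hfnorm,
      ← ENNReal.ofReal_rpow_of_nonneg (norm_nonneg _) (by linarith)]
  have hfp : eLpNorm f p μ = I ^ (1 / pr) := by
    rw [eLpNorm_eq_lintegral_rpow_enorm_toReal hp0 hp_top]
    congr 1
    rw [hI_def]
    congr 1
    ext x
    rw [enorm_eq_nnnorm, hfnnorm, ← ENNReal.rpow_mul, hkey]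
  have hMemf : MemLp f p μ :=
    ⟨hf_meas.aestronglyMeasurable, by
      rw [hfp]; exact ENNReal.rpow_lt_top_of_nonneg (by positivity) hI_top⟩
  have hfb : ∀ x, f x * b x = ((‖b x‖ ^ r : ℝ) : ℂ) := by
    intro x
    rcases eq_or_ne (b x) 0 with h0 | h0
    · simp [hf_def, h0, Real.zero_rpow hr0.ne']
    · have hb0 : (0:ℝ) < ‖b x‖ := norm_pos_iff.mpr h0
      have hreal : ‖b x‖ ^ (r - 1) / ‖b x‖ * ‖b x‖ ^ (2:ℕ) = ‖b x‖ ^ r := by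
        rw [div_mul_eq_mul_div, ← Real.rpow_natCast ‖b x‖ 2, ← Real.rpow_add hb0,
          div_eq_iff hb0.ne', ← Real.rpow_add_one hb0.ne' r]
        congr 1
        ring
      simp only [hf_def, if_neg h0]
      rw [mul_assoc, Complex.conj_mul', ← Complex.ofReal_pow, ← Complex.ofReal_mul]
      exact_mod_cast congrArg (Complex.ofReal) hreal
  have hInt : Integrable (fun x => ‖b x‖ ^ r) μ := by
    have := hbL.integrable_norm_rpow hp'0 hp'_top
    simpa [hr_def] using this
  have hIr : ∫ x, ‖b x‖ ^ r ∂μ = I.toReal := by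
    rw [integral_eq_lintegral_of_nonneg_ae
      (Filter.Eventually.of_forall fun x => by positivity) hInt.aestronglyMeasurable]
    congr 1
    apply lintegral_congr fun x => ?_
    rw [← ENNReal.ofReal_rpow_of_nonneg (norm_nonneg _) hr0.le, ofReal_norm]; rfl
  have hnorm_int : ‖∫ x, f x * b x ∂μ‖ = I.toReal := by
    have h3 : (∫ x, f x * b x ∂μ) = ((∫ x, ‖b x‖ ^ r ∂μ : ℝ) : ℂ) := by
      calc (∫ x, f x * b x ∂μ) = ∫ x, ((‖b x‖ ^ r : ℝ) : ℂ) ∂μ :=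
            integral_congr_ae (Filter.Eventually.of_forall fun x => hfb x)
        _ = ((∫ x, ‖b x‖ ^ r ∂μ : ℝ) : ℂ) := integral_ofReal
    rw [h3, Complex.norm_real, Real.norm_eq_abs, hIr, abs_of_nonneg ENNReal.toReal_nonneg]
  have hmain := hC f hMemf
  rw [hnorm_int, hfp] at hmain
  -- convert to ℝ≥0∞
  have hC0 : 0 ≤ C := by
    by_contra h
    push_neg at h
    have h1 : 0 < I.toReal := ENNReal.toReal_pos hI0 hI_top
    have h2 : 0 ≤ (I ^ (1/pr)).toReal := ENNReal.toReal_nonneg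
    nlinarith
  have hEmain : I ≤ ENNReal.ofReal C * I ^ (1 / pr) := by
    have h2 : ENNReal.ofReal I.toReal ≤ ENNReal.ofReal C * I ^ (1 / pr) := by
      calc ENNReal.ofReal I.toReal ≤ ENNReal.ofReal (C * (I ^ (1/pr)).toReal) :=
            ENNReal.ofReal_le_ofReal hmain
        _ = ENNReal.ofReal C * ENNReal.ofReal ((I ^ (1/pr)).toReal) :=
            ENNReal.ofReal_mul hC0
        _ = ENNReal.ofReal C * I ^ (1/pr) := by
            rw [ENNReal.ofReal_toReal
              (ENNReal.rpow_lt_top_of_nonneg (by positivity) hI_top).ne]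
    rwa [ENNReal.ofReal_toReal hI_top] at h2
  have hIsplit : I = I ^ (1 / pr) * I ^ (1 / r) := by
    rw [← ENNReal.rpow_add _ _ hI0 hI_top, hpq, ENNReal.rpow_one]
  have hEmain2 : I ^ (1 / pr) * I ^ (1 / r) ≤ I ^ (1 / pr) * ENNReal.ofReal C := by
    rw [mul_comm (I ^ (1 / pr)) (ENNReal.ofReal C)]
    exact le_trans hIsplit.ge hEmain
  rw [hEb]
  have hpow0 : I ^ (1 / pr) ≠ 0 := by
    intro h
    rcases ENNReal.rpow_eq_zero_iff.mp h with ⟨h1, _⟩ | ⟨h1, _⟩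
    · exact hI0 h1
    · exact hI_top h1
  have hpow_top : I ^ (1 / pr) ≠ ∞ := (ENNReal.rpow_lt_top_of_nonneg (by positivity) hI_top).ne
  exact (ENNReal.mul_le_mul_iff_right hpow0 hpow_top).mp hEmain2


/-- Converse Hölder, `p = 1`, `p' = ∞` case. -/
lemma aux_conv_holder_top {X : Type*} [MeasurableSpace X] {μ : Measure X}
    {b : X → ℂ} (hb : Measurable b) (hbtop : MemLp b ∞ μ)
    (hsupp : μ (Function.support b) < ∞)
    {C : ℝ} (hC0 : 0 ≤ C)
    (hC : ∀ f : X → ℂ, MemLp f 1 μ → ‖∫ x, f x * b x ∂μ‖ ≤ C * (eLpNorm f 1 μ).toReal) :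
    eLpNorm b ∞ μ ≤ ENNReal.ofReal C := by
  by_contra hcon
  push_neg at hcon
  obtain ⟨t, ht1, ht2⟩ := exists_between hcon
  have ht_top : t ≠ ∞ := ht2.ne_top
  set A : Set X := {x | t < (‖b x‖₊ : ℝ≥0∞)} with hA_def
  have hA_meas : MeasurableSet A := by
    exact measurableSet_lt measurable_const hb.enorm
  have hA0 : μ A ≠ 0 := by
    intro h
    have hae : ∀ᵐ x ∂μ, (‖b x‖₊ : ℝ≥0∞) ≤ t := by
      rw [ae_iff]
      convert h using 2
      ext x
      simp [hA_def, not_le]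
    have : eLpNorm b ∞ μ ≤ t := by
      rw [eLpNorm_exponent_top]
      exact essSup_le_of_ae_le t hae
    exact absurd (lt_of_le_of_lt this ht2) (lt_irrefl _)
  have hA_sub : A ⊆ Function.support b := by
    intro x hx
    simp only [Function.mem_support]
    intro h0
    rw [hA_def] at hx
    simp [hA_def, h0] at hx
  have hA_fin : μ A < ∞ := lt_of_le_of_lt (measure_mono hA_sub) hsupp
  -- test function
  set f : X → ℂ := A.indicator (fun x => (starRingEnd ℂ) (b x) / (‖b x‖ : ℂ)) with hf_def
  have hf_meas : Measurable f := by
    apply Measurable.indicator _ hA_meas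
    exact (Complex.continuous_conj.measurable.comp hb).div
      (Complex.measurable_ofReal.comp hb.norm)
  have hbne : ∀ x ∈ A, b x ≠ 0 := by
    intro x hx h0
    exact absurd hx (by simp [hA_def, h0])
  have hfnorm : ∀ x, ‖f x‖ = A.indicator (fun _ => (1:ℝ)) x := by
    intro x
    rcases Classical.em (x ∈ A) with hx | hx
    · have h0 := hbne x hx
      have hb0 : (0:ℝ) < ‖b x‖ := norm_pos_iff.mpr h0
      rw [hf_def, Set.indicator_of_mem hx, Set.indicator_of_mem hx, norm_div,
        RingHomIsometric.norm_map, Complex.norm_real, Real.norm_eq_abs,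
        abs_of_nonneg (norm_nonneg _), div_self hb0.ne']
    · rw [hf_def, Set.indicator_of_notMem hx, Set.indicator_of_notMem hx, norm_zero]
  have hf1 : eLpNorm f 1 μ = μ A := by
    rw [eLpNorm_one_eq_lintegral_enorm]
    have : ∀ x, (‖f x‖₊ : ℝ≥0∞) = A.indicator (fun _ => (1:ℝ≥0∞)) x := by
      intro x
      rw [← enorm_eq_nnnorm, ← ofReal_norm, hfnorm]
      rcases Classical.em (x ∈ A) with hx | hx
      · simp [Set.indicator_of_mem hx]
      · simp [Set.indicator_of_notMem hx]
    rw [lintegral_congr (fun x => (enorm_eq_nnnorm (f x)).trans (this x)), lintegral_indicator hA_meas _]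
    simp
  have hMemf : MemLp f 1 μ :=
    ⟨hf_meas.aestronglyMeasurable, by rw [hf1]; exact hA_fin⟩
  have hfb : ∀ x, f x * b x = ((A.indicator (fun x => ‖b x‖) x : ℝ) : ℂ) := by
    intro x
    rcases Classical.em (x ∈ A) with hx | hx
    · have h0 := hbne x hx
      have hb0 : (0:ℝ) < ‖b x‖ := norm_pos_iff.mpr h0
      rw [hf_def, Set.indicator_of_mem hx, Set.indicator_of_mem hx, div_mul_eq_mul_div,
        Complex.conj_mul', ← Complex.ofReal_pow]
      rw [← Complex.ofReal_div]
      congr 1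
      rw [pow_two, mul_div_assoc, div_self hb0.ne', mul_one]
    · rw [hf_def, Set.indicator_of_notMem hx, Set.indicator_of_notMem hx, zero_mul,
        Complex.ofReal_zero]
  -- the essential bound M
  have hM_top : eLpNormEssSup b μ ≠ ∞ := by
    have := hbtop.2
    rw [eLpNorm_exponent_top] at this
    exact this.ne
  set L : ℝ≥0∞ := ∫⁻ x in A, (‖b x‖₊ : ℝ≥0∞) ∂μ with hL_def
  have hL_top : L ≠ ∞ := by
    have h1 : L ≤ eLpNormEssSup b μ * μ A := by
      rw [hL_def]
      calc ∫⁻ x in A, (‖b x‖₊ : ℝ≥0∞) ∂μ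
          ≤ ∫⁻ _ in A, eLpNormEssSup b μ ∂μ := by
            apply lintegral_mono_ae
            exact (ae_restrict_of_ae (ae_le_eLpNormEssSup (f := b))).mono fun x hx => hx
        _ = eLpNormEssSup b μ * μ A := by
            rw [setLIntegral_const]
    exact (lt_of_le_of_lt h1 (ENNReal.mul_lt_top (lt_top_iff_ne_top.mpr hM_top) hA_fin)).ne
  have hL_ge : t * μ A ≤ L := by
    rw [hL_def]
    calc t * μ A = ∫⁻ _ in A, t ∂μ := by rw [setLIntegral_const]
      _ ≤ ∫⁻ x in A, (‖b x‖₊ : ℝ≥0∞) ∂μ := by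
          apply setLIntegral_mono_ae hb.enorm.aemeasurable
          exact Filter.Eventually.of_forall fun x hx => (hx : t < _).le
  have hIr : ∫ x, A.indicator (fun x => ‖b x‖) x ∂μ = L.toReal := by
    rw [integral_eq_lintegral_of_nonneg_ae
      (Filter.Eventually.of_forall fun x => Set.indicator_nonneg (fun x _ => norm_nonneg _) x)
      ((hb.norm.indicator hA_meas).aestronglyMeasurable)]
    congr 1
    rw [hL_def, ← lintegral_indicator hA_meas _]
    apply lintegral_congr fun x => ?_
    rcases Classical.em (x ∈ A) with hx | hx
    · rw [Set.indicator_of_mem hx, Set.indicator_of_mem hx, ofReal_norm]; rfl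
    · rw [Set.indicator_of_notMem hx, Set.indicator_of_notMem hx, ENNReal.ofReal_zero]
  have hnorm_int : ‖∫ x, f x * b x ∂μ‖ = L.toReal := by
    have h3 : (∫ x, f x * b x ∂μ) = ((∫ x, A.indicator (fun x => ‖b x‖) x ∂μ : ℝ) : ℂ) := by
      calc (∫ x, f x * b x ∂μ) = ∫ x, ((A.indicator (fun x => ‖b x‖) x : ℝ) : ℂ) ∂μ :=
            integral_congr_ae (Filter.Eventually.of_forall fun x => hfb x)
        _ = _ := integral_ofReal
    rw [h3, Complex.norm_real, Real.norm_eq_abs, hIr, abs_of_nonneg ENNReal.toReal_nonneg]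
  have hmain := hC f hMemf
  rw [hnorm_int, hf1] at hmain
  -- t.toReal * μ A.toReal ≤ C * μ A.toReal
  have h5 : t.toReal * (μ A).toReal ≤ C * (μ A).toReal := by
    calc t.toReal * (μ A).toReal = (t * μ A).toReal := (ENNReal.toReal_mul).symm
      _ ≤ L.toReal := ENNReal.toReal_mono hL_top hL_ge
      _ ≤ C * (μ A).toReal := hmain
  have hμA_pos : 0 < (μ A).toReal := ENNReal.toReal_pos hA0 hA_fin.ne
  have h6 : t.toReal ≤ C := le_of_mul_le_mul_right h5 hμA_pos
  have h7 : t ≤ ENNReal.ofReal C := by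
    rw [← ENNReal.ofReal_toReal ht_top]
    exact ENNReal.ofReal_le_ofReal h6
  rw [eLpNorm_exponent_top] at ht2
  exact absurd (lt_of_le_of_lt h7 ht1) (lt_irrefl _)


section PairCLM

variable {X : Type*} [MeasurableSpace X] {μ : Measure X} {p p' : ℝ≥0∞}

/-- Integration against a fixed `L^{p'}` function, as a continuous linear
functional on `L^p`. -/
noncomputable def pairCLM [Fact (1 ≤ p)] {b : X → ℂ} (hb : MemLp b p' μ)
    (hpq : 1 / (1:ℝ≥0∞) = 1 / p + 1 / p') : Lp ℂ p μ →L[ℂ] ℂ :=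
  have hint : ∀ F : Lp ℂ p μ, Integrable (fun x => F x * b x) μ := fun F =>
    memLp_one_iff_integrable.mp (by
      rw [show (fun x => F x * b x) = (⇑F • b) from rfl]
      exact (haveI : ENNReal.HolderTriple p p' 1 := ⟨by simpa [one_div] using hpq.symm⟩; hb.smul (Lp.memLp F)))
  LinearMap.mkContinuous
    { toFun := fun F => ∫ x, F x * b x ∂μ
      map_add' := fun F G => by
        show (∫ x, (↑↑(F + G) : X → ℂ) x * b x ∂μ)
          = (∫ x, F x * b x ∂μ) + ∫ x, G x * b x ∂μ
        have h1 : (fun x => (↑↑(F + G) : X → ℂ) x * b x)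
            =ᵐ[μ] fun x => F x * b x + G x * b x := by
          filter_upwards [Lp.coeFn_add F G] with x hx
          rw [hx, Pi.add_apply, add_mul]
        rw [integral_congr_ae h1, integral_add (hint F) (hint G)]
      map_smul' := fun c F => by
        show (∫ x, (↑↑(c • F) : X → ℂ) x * b x ∂μ) = c • ∫ x, F x * b x ∂μ
        have h1 : (fun x => (↑↑(c • F) : X → ℂ) x * b x)
            =ᵐ[μ] fun x => c • (F x * b x) := by
          filter_upwards [Lp.coeFn_smul c F] with x hx
          rw [hx, Pi.smul_apply, smul_eq_mul, smul_eq_mul, mul_assoc]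
        rw [integral_congr_ae h1, integral_smul] }
    ((eLpNorm b p' μ).toReal)
    (by
      intro F
      show ‖∫ x, F x * b x ∂μ‖ ≤ _
      have h2 : ‖∫ x, F x * b x ∂μ‖ ≤ ∫ x, ‖F x * b x‖ ∂μ :=
        norm_integral_le_integral_norm _
      have h3 : ∫ x, ‖F x * b x‖ ∂μ = (eLpNorm (fun x => F x * b x) 1 μ).toReal := by
        rw [eLpNorm_one_eq_lintegral_enorm]
        exact integral_norm_eq_lintegral_enorm ((Lp.aestronglyMeasurable F).mul hb.1)
      have h4 : eLpNorm (fun x => F x * b x) 1 μ ≤ eLpNorm (⇑F) p μ * eLpNorm b p' μ := by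
        rw [show (fun x => F x * b x) = (⇑F • b) from rfl]
        exact
          (haveI : ENNReal.HolderTriple p p' 1 := ⟨by simpa [one_div] using hpq.symm⟩; eLpNorm_smul_le_mul_eLpNorm hb.1 (Lp.aestronglyMeasurable F))
      have h5 : (eLpNorm (fun x => F x * b x) 1 μ).toReal
          ≤ (eLpNorm (⇑F) p μ).toReal * (eLpNorm b p' μ).toReal := by
        rw [← ENNReal.toReal_mul]
        exact ENNReal.toReal_mono
          (ENNReal.mul_ne_top (Lp.memLp F).2.ne hb.2.ne) h4
      calc ‖∫ x, F x * b x ∂μ‖ ≤ (eLpNorm (fun x => F x * b x) 1 μ).toReal := by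
            rw [← h3]; exact h2
        _ ≤ (eLpNorm (⇑F) p μ).toReal * (eLpNorm b p' μ).toReal := h5
        _ = (eLpNorm b p' μ).toReal * ‖F‖ := by rw [Lp.norm_def, mul_comm])

lemma pairCLM_apply [Fact (1 ≤ p)] {b : X → ℂ} (hb : MemLp b p' μ)
    (hpq : 1 / (1:ℝ≥0∞) = 1 / p + 1 / p') (F : Lp ℂ p μ) :
    pairCLM hb hpq F = ∫ x, F x * b x ∂μ := rfl

end PairCLM
/-- Let `(X, μ)` be σ-finite, `1 ≤ p < ∞`, and `g : X → ℂ`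
measurable such that `f·g ∈ L^1` for all `f ∈ L^p`. Then `g ∈ L^{p'}`, where
`1/p + 1/p' = 1` (`p' = ∞` when `p = 1`). -/


theorem l1_multiplier_mem_dual_exponent
    {X : Type*} [MeasurableSpace X] (μ : Measure X) [SigmaFinite μ]
    (p p' : ℝ≥0∞) (hp : 1 ≤ p) (hp_top : p ≠ ∞)
    (hconj : 1 / p + 1 / p' = 1)
    (g : X → ℂ) (hg : Measurable g)
    (hmul : ∀ f : X → ℂ, MemLp f p μ → MemLp (fun x => f x * g x) 1 μ) :
    MemLp g p' μ := by
  haveI : Fact (1 ≤ p) := ⟨hp⟩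
  have hp0 : p ≠ 0 := fun h => by rw [h] at hp; exact absurd hp (by simp)
  have hp'0 : p' ≠ 0 := by
    intro h
    rw [h] at hconj
    simp [ENNReal.div_zero] at hconj
  -- truncating sequence
  set A : ℕ → Set X := fun n => spanningSets μ n ∩ {x | ‖g x‖ ≤ (n:ℝ)} with hA_def
  have hA_meas : ∀ n, MeasurableSet (A n) := fun n =>
    (measurableSet_spanningSets μ n).inter (measurableSet_le hg.norm measurable_const)
  have hA_mono : Monotone A := by
    intro m n hmn
    apply Set.inter_subset_inter (monotone_spanningSets μ hmn)
    intro x hx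
    simp only [Set.mem_setOf_eq] at hx ⊢
    exact le_trans hx (by exact_mod_cast Nat.cast_le.mpr hmn)
  have hA_fin : ∀ n, μ (A n) < ∞ := fun n =>
    lt_of_le_of_lt (measure_mono Set.inter_subset_left) (measure_spanningSets_lt_top μ n)
  set b : ℕ → X → ℂ := fun n => (A n).indicator g with hb_def
  have hb_eq : ∀ n x, b n x = (A n).indicator g x := fun n x => rfl
  have hb_meas : ∀ n, Measurable (b n) := fun n => hg.indicator (hA_meas n)
  have hb_norm_le : ∀ n x, ‖b n x‖ ≤ (n:ℝ) := by
    intro n x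
    rcases Classical.em (x ∈ A n) with hx | hx
    · rw [hb_eq]; rw [Set.indicator_of_mem hx]; exact hx.2
    · rw [hb_eq]; rw [Set.indicator_of_notMem hx]; simp
  have hb_top : ∀ n, MemLp (b n) ∞ μ := fun n =>
    memLp_top_of_bound (hb_meas n).aestronglyMeasurable (n:ℝ)
      (Filter.Eventually.of_forall (hb_norm_le n))
  have hb_supp : ∀ n, μ (Function.support (b n)) < ∞ := fun n =>
    lt_of_le_of_lt (measure_mono Set.support_indicator_subset) (hA_fin n)
  have hb_le : ∀ n x, ‖b n x‖ ≤ ‖g x‖ := by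
    intro n x
    rcases Classical.em (x ∈ A n) with hx | hx
    · rw [hb_eq]; rw [Set.indicator_of_mem hx]
    · rw [hb_eq]; rw [Set.indicator_of_notMem hx]; simp
  have hb_eventually : ∀ x, ∃ n, b n x = g x := by
    intro x
    obtain ⟨n1, hn1⟩ : ∃ n, x ∈ spanningSets μ n := by
      have hx : x ∈ ⋃ i, spanningSets μ i := by rw [iUnion_spanningSets]; trivial
      exact Set.mem_iUnion.mp hx
    obtain ⟨n2, hn2⟩ := exists_nat_ge ‖g x‖
    refine ⟨max n1 n2, ?_⟩
    have hxA : x ∈ A (max n1 n2) := by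
      constructor
      · exact monotone_spanningSets μ (le_max_left _ _) hn1
      · exact le_trans hn2 (by exact_mod_cast le_max_right n1 n2)
    rw [hb_eq]; exact Set.indicator_of_mem hxA g
  have hb_mem_p' : ∀ n, MemLp (b n) p' μ := by
    intro n
    refine ⟨(hb_meas n).aestronglyMeasurable, ?_⟩
    calc eLpNorm (b n) p' μ ≤ eLpNorm ((A n).indicator (fun _ => (n:ℝ))) p' μ := by
          apply eLpNorm_mono
          intro x
          rcases Classical.em (x ∈ A n) with hx | hx
          · rw [hb_eq, Set.indicator_of_mem hx, Set.indicator_of_mem hx, Real.norm_natCast]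
            exact hx.2
          · rw [hb_eq]; rw [Set.indicator_of_notMem hx, Set.indicator_of_notMem hx]; simp
      _ ≤ (‖(n:ℝ)‖₊ : ℝ≥0∞) * μ (A n) ^ (1 / p'.toReal) := eLpNorm_indicator_const_le _ _
      _ < ∞ := ENNReal.mul_lt_top ENNReal.coe_lt_top
          (ENNReal.rpow_lt_top_of_nonneg (by positivity) (hA_fin n).ne)
  have hconj1 : 1 / (1:ℝ≥0∞) = 1 / p + 1 / p' := by rw [hconj]; simp
  set T : ℕ → (Lp ℂ p μ →L[ℂ] ℂ) := fun n => pairCLM (hb_mem_p' n) hconj1 with hT_def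
  have hpt : ∀ F : Lp ℂ p μ, ∃ C, ∀ n, ‖T n F‖ ≤ C := by
    intro F
    have hintg : Integrable (fun x => F x * g x) μ :=
      memLp_one_iff_integrable.mp (hmul _ (Lp.memLp F))
    refine ⟨∫ x, ‖F x * g x‖ ∂μ, fun n => ?_⟩
    have hintb : Integrable (fun x => F x * b n x) μ :=
      memLp_one_iff_integrable.mp
        (by rw [show (fun x => F x * b n x) = (⇑F • b n) from rfl]; exact (haveI : ENNReal.HolderTriple p p' 1 := ⟨by simpa [one_div] using hconj1.symm⟩; (hb_mem_p' n).smul (Lp.memLp F)))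
    calc ‖T n F‖ = ‖∫ x, F x * b n x ∂μ‖ := by rw [hT_def, pairCLM_apply]
      _ ≤ ∫ x, ‖F x * b n x‖ ∂μ := norm_integral_le_integral_norm _
      _ ≤ ∫ x, ‖F x * g x‖ ∂μ := by
          apply integral_mono hintb.norm hintg.norm
          intro x
          simp only [norm_mul]
          exact mul_le_mul_of_nonneg_left (hb_le n x) (norm_nonneg _)
  obtain ⟨C', hC'⟩ := banach_steinhaus hpt
  have hC'0 : 0 ≤ C' := le_trans (norm_nonneg (T 0)) (hC' 0)
  have hkey : ∀ n, ∀ f : X → ℂ, MemLp f p μ →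
      ‖∫ x, f x * b n x ∂μ‖ ≤ C' * (eLpNorm f p μ).toReal := by
    intro n f hf
    have h1 : (∫ x, f x * b n x ∂μ) = T n (hf.toLp f) := by
      rw [hT_def, pairCLM_apply]
      refine integral_congr_ae ?_
      filter_upwards [hf.coeFn_toLp] with x hx
      rw [hx]
    rw [h1]
    calc ‖T n (hf.toLp f)‖ ≤ ‖T n‖ * ‖hf.toLp f‖ := (T n).le_opNorm _
      _ ≤ C' * ‖hf.toLp f‖ := mul_le_mul_of_nonneg_right (hC' n) (norm_nonneg _)
      _ = C' * (eLpNorm f p μ).toReal := by rw [Lp.norm_toLp]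
  rcases eq_or_lt_of_le hp with hp1 | hp1
  · -- p = 1, p' = ∞
    subst hp1
    have hp'_top : p' = ∞ := by
      have h1 : 1 / p' = 0 := by
        have h2 : 1 / (1:ℝ≥0∞) + 1 / p' = 1 + 0 := by simpa using hconj
        rw [show (1:ℝ≥0∞) / 1 = 1 by simp] at h2
        exact (ENNReal.add_right_inj (by simp)).mp h2
      simpa [ENNReal.div_eq_zero_iff] using h1
    have hbn_bound : ∀ n, eLpNorm (b n) ∞ μ ≤ ENNReal.ofReal C' := fun n =>
      aux_conv_holder_top (hb_meas n) (hb_top n) (hb_supp n) hC'0 (hkey n)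
    have hae : ∀ᵐ x ∂μ, ∀ n, (‖b n x‖₊ : ℝ≥0∞) ≤ ENNReal.ofReal C' := by
      rw [ae_all_iff]
      intro n
      have h1 : eLpNormEssSup (b n) μ ≤ ENNReal.ofReal C' := by
        rw [← eLpNorm_exponent_top]
        exact hbn_bound n
      exact (ae_le_eLpNormEssSup (f := b n)).mono fun x hx => le_trans hx h1
    have hgbound : ∀ᵐ x ∂μ, ‖g x‖ ≤ C' := by
      filter_upwards [hae] with x hx
      obtain ⟨n, hn⟩ := hb_eventually x
      have h2 := hx n
      rw [hn, ← enorm_eq_nnnorm, ← ofReal_norm] at h2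
      exact (ENNReal.ofReal_le_ofReal_iff hC'0).mp h2
    rw [hp'_top]
    exact memLp_top_of_bound hg.aestronglyMeasurable C' hgbound
  · -- 1 < p
    have hinvp_ne_top : 1 / p ≠ ∞ := by
      simp [ENNReal.div_eq_top, hp0]
    have h1p' : 1 / p' = 1 - 1 / p :=
      ENNReal.eq_sub_of_add_eq hinvp_ne_top (by rw [add_comm]; exact hconj)
    have hinvp_lt : 1 / p < 1 := by
      rw [one_div]
      exact ENNReal.inv_lt_one.mpr hp1
    have hinvp'_ne0 : 1 / p' ≠ 0 := by
      rw [h1p']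
      exact (tsub_pos_iff_lt.mpr hinvp_lt).ne'
    have hp'_ne_top : p' ≠ ∞ := by
      intro h
      rw [h] at hinvp'_ne0
      simp at hinvp'_ne0
    have hinvp'_ne_top : 1 / p' ≠ ∞ := by
      simp [ENNReal.div_eq_top, hp'0]
    have hpq_real : 1 / p.toReal + 1 / p'.toReal = 1 := by
      have h2 := congrArg ENNReal.toReal hconj
      rw [ENNReal.toReal_add hinvp_ne_top hinvp'_ne_top, ENNReal.toReal_div,
        ENNReal.toReal_div, ENNReal.toReal_one] at h2
      simpa using h2
    have hbn_bound : ∀ n, eLpNorm (b n) p' μ ≤ ENNReal.ofReal C' := fun n =>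
      aux_conv_holder_lt_top hp0 hp_top hp'0 hp'_ne_top hpq_real
        (hb_meas n) (hb_mem_p' n) (hkey n)
    set r : ℝ := p'.toReal with hr_def
    have hr0 : 0 < r := ENNReal.toReal_pos hp'0 hp'_ne_top
    refine ⟨hg.aestronglyMeasurable, ?_⟩
    rw [eLpNorm_eq_lintegral_rpow_enorm_toReal hp'0 hp'_ne_top]
    have hmono : Monotone (fun n => fun x => (‖b n x‖₊ : ℝ≥0∞) ^ r) := by
      intro m n hmn
      intro x
      apply ENNReal.rpow_le_rpow _ hr0.le
      rw [← enorm_eq_nnnorm, ← enorm_eq_nnnorm, ← ofReal_norm, ← ofReal_norm]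
      apply ENNReal.ofReal_le_ofReal
      rcases Classical.em (x ∈ A m) with hx | hx
      · have hxn : x ∈ A n := hA_mono hmn hx
        rw [hb_eq, hb_eq, Set.indicator_of_mem hx, Set.indicator_of_mem hxn]
      · rw [hb_eq]; rw [Set.indicator_of_notMem hx]; simp
    have hsup : ∀ x, (⨆ n, (‖b n x‖₊ : ℝ≥0∞) ^ r) = (‖g x‖₊ : ℝ≥0∞) ^ r := by
      intro x
      apply le_antisymm
      · apply iSup_le
        intro n
        apply ENNReal.rpow_le_rpow _ hr0.le
        rw [← enorm_eq_nnnorm, ← enorm_eq_nnnorm, ← ofReal_norm, ← ofReal_norm]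
        exact ENNReal.ofReal_le_ofReal (hb_le n x)
      · obtain ⟨n, hn⟩ := hb_eventually x
        apply le_iSup_of_le n
        rw [hn]
    have hlin : ∫⁻ x, (‖g x‖₊ : ℝ≥0∞) ^ r ∂μ = ⨆ n, ∫⁻ x, (‖b n x‖₊ : ℝ≥0∞) ^ r ∂μ := by
      rw [← lintegral_iSup (f := fun n x => (‖b n x‖₊ : ℝ≥0∞) ^ r) (fun n => (hb_meas n).enorm.pow_const r) hmono]
      exact lintegral_congr fun x => (hsup x).symm
    have hbound : ∀ n, ∫⁻ x, (‖b n x‖₊ : ℝ≥0∞) ^ r ∂μ ≤ ENNReal.ofReal C' ^ r := by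
      intro n
      have h2 : (∫⁻ x, (‖b n x‖₊ : ℝ≥0∞) ^ r ∂μ) = eLpNorm (b n) p' μ ^ r := by
        rw [eLpNorm_eq_lintegral_rpow_enorm_toReal hp'0 hp'_ne_top, ← ENNReal.rpow_mul,
          one_div, inv_mul_cancel₀ hr0.ne', ENNReal.rpow_one]; rfl
      rw [h2]
      exact ENNReal.rpow_le_rpow (hbn_bound n) hr0.le
    have hfin : ∫⁻ x, (‖g x‖₊ : ℝ≥0∞) ^ r ∂μ ≤ ENNReal.ofReal C' ^ r := by
      rw [hlin]; exact iSup_le hbound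
    calc (∫⁻ x, (‖g x‖₊ : ℝ≥0∞) ^ r ∂μ) ^ (1 / r)
        ≤ (ENNReal.ofReal C' ^ r) ^ (1 / r) := ENNReal.rpow_le_rpow hfin (by positivity)
      _ < ∞ := ENNReal.rpow_lt_top_of_nonneg (by positivity)
          (ENNReal.rpow_lt_top_of_nonneg hr0.le ENNReal.ofReal_ne_top).ne
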